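/- Let f(z) = (α z² + β z + 1)/(z² + β z + α), D(ω) = |e^{j2ω} + β e^{jω} + α|², and ω_p ∈ (0, π) with D(ω_p) ≠ 0. Then θ_f'(ω_p) = sin(θ_f(ω_p)) cos(ω_p)/sin(ω_p) + 2 sin²(ω_p)(α² - 1)/D(ω_p), where sin(θ_f(ω_p)) = Im f(e^{jω_p}). -/

import Mathlib

open Real Complex

set_option maxHeartbeats 1000000 in
private lemma L3 (Z Zb α β : ℂ) (hZ1 : Z * Zb = 1)
    (hW0 : Z ^ 2 + β * Z + α ≠ 0) (hWb0 : Zb ^ 2 + β * Zb + α ≠ 0) :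
    Complex.I * Z * (((2 * α * Z + β) * (Z ^ 2 + β * Z + α)
        - (α * Z ^ 2 + β * Z + 1) * (2 * Z + β)) / (Z ^ 2 + β * Z + α) ^ 2)
      / ((α * Z ^ 2 + β * Z + 1) / (Z ^ 2 + β * Z + α))
    = Complex.I * ((2 * α * Z + β) * Zb * (Z ^ 2 + β * Z + α)
        - (2 * Z ^ 2 + β * Z) * (Zb ^ 2 + β * Zb + α))
      / ((Z ^ 2 + β * Z + α) * (Zb ^ 2 + β * Zb + α)) := by
  have hZ0 : Z ≠ 0 := left_ne_zero_of_mul_eq_one hZ1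
  have hUeq : α * Z ^ 2 + β * Z + 1 = Z ^ 2 * (Zb ^ 2 + β * Zb + α) := by
    linear_combination (-(Z * Zb) - 1 - β * Z) * hZ1
  have hU0 : α * Z ^ 2 + β * Z + 1 ≠ 0 := by
    rw [hUeq]; exact mul_ne_zero (pow_ne_zero 2 hZ0) hWb0
  have hWW2 : (Z ^ 2 + β * Z + α) ^ 2 ≠ 0 := pow_ne_zero 2 hW0
  have e1 : Complex.I * Z * (((2 * α * Z + β) * (Z ^ 2 + β * Z + α)
        - (α * Z ^ 2 + β * Z + 1) * (2 * Z + β)) / (Z ^ 2 + β * Z + α) ^ 2)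
      / ((α * Z ^ 2 + β * Z + 1) / (Z ^ 2 + β * Z + α))
      = Complex.I * Z * ((2 * α * Z + β) * (Z ^ 2 + β * Z + α)
          - (α * Z ^ 2 + β * Z + 1) * (2 * Z + β)) * (Z ^ 2 + β * Z + α)
        / ((Z ^ 2 + β * Z + α) ^ 2 * (α * Z ^ 2 + β * Z + 1)) := by
    rw [div_div_eq_mul_div, ← mul_div_assoc, div_mul_eq_mul_div, div_div]
  rw [e1, hUeq, div_eq_div_iff (mul_ne_zero hWW2 (hUeq ▸ hU0)) (mul_ne_zero hW0 hWb0)]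
  linear_combination ((-1 : ℂ) * Z * (Z ^ 2 + β * Z + α) ^ 3 * (Zb ^ 2 + β * Zb + α) * β * Complex.I
    - 2 * Z ^ 2 * (Z ^ 2 + β * Z + α) ^ 3 * (Zb ^ 2 + β * Zb + α) * α * Complex.I) * hZ1

private lemma L1 (α β c s : ℝ) (h : (c : ℂ) ^ 2 + (s : ℂ) ^ 2 = 1) :
    (2 * (α : ℂ) * ((c : ℂ) + s * Complex.I) + β) * ((c : ℂ) - s * Complex.I)
        * (((c : ℂ) + s * Complex.I) ^ 2 + β * ((c : ℂ) + s * Complex.I) + α)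
      - (2 * ((c : ℂ) + s * Complex.I) ^ 2 + β * ((c : ℂ) + s * Complex.I))
        * (((c : ℂ) - s * Complex.I) ^ 2 + β * ((c : ℂ) - s * Complex.I) + α)
    = ((2 * ((α ^ 2 - 1) + (α - 1) * β * c) : ℝ) : ℂ) := by
  push_cast
  linear_combination ((2 : ℂ)*(s:ℂ)^4 + (-2)*(s:ℂ)^4*Complex.I^2 + 4*(c:ℂ)^2*(s:ℂ)^2
      + 2*(β:ℂ)*(c:ℂ)*(s:ℂ)^2 + (-2)*(α:ℂ)*(s:ℂ)^2 + 2*(α:ℂ)*(s:ℂ)^4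
      + (-2)*(α:ℂ)*(s:ℂ)^4*Complex.I^2 + (-4)*(α:ℂ)*(c:ℂ)*(s:ℂ)^3*Complex.I
      + (-2)*(α:ℂ)*(β:ℂ)*(s:ℂ)^3*Complex.I + (-2)*(α:ℂ)*(β:ℂ)*(c:ℂ)*(s:ℂ)^2
      + (-2)*(α:ℂ)^2*(s:ℂ)^2) * Complex.I_sq
    + ((-2 : ℂ) + (-2)*(s:ℂ)^2 + (-2)*(c:ℂ)^2 + (-2)*(β:ℂ)*(c:ℂ)
      + (-2)*(α:ℂ)*(s:ℂ)^2 + 4*(α:ℂ)*(c:ℂ)*(s:ℂ)*Complex.I + 2*(α:ℂ)*(c:ℂ)^2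
      + 2*(α:ℂ)*(β:ℂ)*(s:ℂ)*Complex.I + 2*(α:ℂ)*(β:ℂ)*(c:ℂ) + 2*(α:ℂ)^2) * h

private lemma L2 (α β c s : ℝ) (h : (c : ℂ) ^ 2 + (s : ℂ) ^ 2 = 1) :
    ((α : ℂ) * ((c : ℂ) + s * Complex.I) ^ 2 + β * ((c : ℂ) + s * Complex.I) + 1)
        * (((c : ℂ) - s * Complex.I) ^ 2 + β * ((c : ℂ) - s * Complex.I) + α)
    = (((-1 : ℝ) * s^2 + c^2 + β*c + β*c*s^2 + β*c^3 + β^2*s^2 + β^2*c^2 + α + α*s^4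
        + 2*α*c^2*s^2 + α*c^4 + α*β*c + α*β*c*s^2 + α*β*c^3 + (-1)*α^2*s^2 + α^2*c^2 : ℝ) : ℂ)
      + ((2 * s * ((α - 1) * β + (α ^ 2 - 1) * c) : ℝ) : ℂ) * Complex.I := by
  push_cast
  linear_combination ((s:ℂ)^2 + (β:ℂ)*(s:ℂ)^3*Complex.I + (-1)*(β:ℂ)*(c:ℂ)*(s:ℂ)^2
      + (-1)*(β:ℂ)^2*(s:ℂ)^2 + (-1)*(α:ℂ)*(s:ℂ)^4 + (α:ℂ)*(s:ℂ)^4*Complex.I^2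
      + (-2)*(α:ℂ)*(c:ℂ)^2*(s:ℂ)^2 + (-1)*(α:ℂ)*(β:ℂ)*(s:ℂ)^3*Complex.I
      + (-1)*(α:ℂ)*(β:ℂ)*(c:ℂ)*(s:ℂ)^2 + (α:ℂ)^2*(s:ℂ)^2) * Complex.I_sq
    + ((-1 : ℂ)*(β:ℂ)*(s:ℂ)*Complex.I + (α:ℂ)*(β:ℂ)*(s:ℂ)*Complex.I) * h

theorem stmt_12 (α β : ℝ) (ωp : ℝ) (hωp : ωp ∈ Set.Ioo 0 π)
    (hD : ‖Complex.exp (2 * ωp * Complex.I) + β * Complex.exp (ωp * Complex.I) + α‖ ^ 2 ≠ 0) :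
    (let z : ℂ := Complex.exp (ωp * Complex.I)
     let num : ℂ := α * z ^ 2 + β * z + 1
     let den : ℂ := z ^ 2 + β * z + α
     let f' : ℂ := ((2 * α * z + β) * den - num * (2 * z + β)) / den ^ 2
     (Complex.I * z * f' / (num / den)).im) =
      (let z : ℂ := Complex.exp (ωp * Complex.I)
       let D : ℝ := ‖Complex.exp (2 * ωp * Complex.I) + β * z + α‖ ^ 2
       ((α * z ^ 2 + β * z + 1) / (z ^ 2 + β * z + α)).im * Real.cos ωp / Real.sin ωp +
         2 * Real.sin ωp ^ 2 * (α ^ 2 - 1) / D) := by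
  obtain ⟨h0, hπ⟩ := hωp
  have hs : Real.sin ωp ≠ 0 := ne_of_gt (Real.sin_pos_of_pos_of_lt_pi h0 hπ)
  have hcs : Real.cos ωp ^ 2 + Real.sin ωp ^ 2 = 1 := Real.cos_sq_add_sin_sq ωp
  have hcsC : ((Real.cos ωp : ℂ)) ^ 2 + ((Real.sin ωp : ℂ)) ^ 2 = 1 := by exact_mod_cast hcs
  have hz : Complex.exp (ωp * Complex.I)
      = (Real.cos ωp : ℂ) + (Real.sin ωp : ℂ) * Complex.I := by
    rw [Complex.exp_mul_I, ← Complex.ofReal_cos, ← Complex.ofReal_sin]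
  have h2 : Complex.exp (2 * ωp * Complex.I)
      = ((Real.cos ωp : ℂ) + (Real.sin ωp : ℂ) * Complex.I) ^ 2 := by
    rw [show (2 * (ωp : ℂ) * Complex.I) = ωp * Complex.I + ωp * Complex.I by ring,
      Complex.exp_add, hz]
    ring
  set c : ℝ := Real.cos ωp
  set s : ℝ := Real.sin ωp
  have hZ1 : ((c : ℂ) + s * Complex.I) * ((c : ℂ) - s * Complex.I) = 1 := by
    linear_combination hcsC - (s : ℂ) ^ 2 * Complex.I_sq
  have hW0 : ((c : ℂ) + s * Complex.I) ^ 2 + β * ((c : ℂ) + s * Complex.I) + α ≠ 0 := by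
    intro h
    apply hD
    rw [h2, hz, h]
    simp
  have hconj : (starRingEnd ℂ) (((c : ℂ) + s * Complex.I) ^ 2 + β * ((c : ℂ) + s * Complex.I) + α)
      = ((c : ℂ) - s * Complex.I) ^ 2 + β * ((c : ℂ) - s * Complex.I) + α := by
    simp [Complex.conj_ofReal, sub_mul, mul_sub]
    ring
  have hWb0 : ((c : ℂ) - s * Complex.I) ^ 2 + β * ((c : ℂ) - s * Complex.I) + α ≠ 0 := by
    rw [← hconj]
    exact star_ne_zero.mpr hW0
  have hWWb : (((c : ℂ) + s * Complex.I) ^ 2 + β * ((c : ℂ) + s * Complex.I) + α)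
        * (((c : ℂ) - s * Complex.I) ^ 2 + β * ((c : ℂ) - s * Complex.I) + α)
      = ((Complex.normSq (((c : ℂ) + s * Complex.I) ^ 2 + β * ((c : ℂ) + s * Complex.I) + α) : ℝ) : ℂ) := by
    rw [← hconj, Complex.mul_conj]
  have hDr : Complex.normSq (((c : ℂ) + s * Complex.I) ^ 2 + β * ((c : ℂ) + s * Complex.I) + α) ≠ 0 := by
    simpa [Complex.normSq_eq_norm_sq] using (by rwa [h2, hz] at hD)
  set Dr : ℝ := Complex.normSq (((c : ℂ) + s * Complex.I) ^ 2 + β * ((c : ℂ) + s * Complex.I) + α)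
    with hDrdef
  dsimp only
  rw [h2, hz]
  rw [L3 _ _ _ _ hZ1 hW0 hWb0, L1 α β c s hcsC, hWWb]
  -- LHS now: (I * ↑xre / ↑Dr).im
  have hLHS : (Complex.I * ((2 * ((α ^ 2 - 1) + (α - 1) * β * c) : ℝ) : ℂ) / (Dr : ℂ)).im
      = 2 * ((α ^ 2 - 1) + (α - 1) * β * c) / Dr := by
    simp only [Complex.div_im, Complex.mul_re, Complex.mul_im, Complex.I_re, Complex.I_im,
      Complex.ofReal_re, Complex.ofReal_im, Complex.normSq_ofReal]
    field_simp
    ring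
  rw [hLHS]
  -- RHS : compute (num/den).im
  have hdiv : ((α : ℂ) * ((c : ℂ) + s * Complex.I) ^ 2 + β * ((c : ℂ) + s * Complex.I) + 1)
        / (((c : ℂ) + s * Complex.I) ^ 2 + β * ((c : ℂ) + s * Complex.I) + α)
      = (((α : ℂ) * ((c : ℂ) + s * Complex.I) ^ 2 + β * ((c : ℂ) + s * Complex.I) + 1)
          * (((c : ℂ) - s * Complex.I) ^ 2 + β * ((c : ℂ) - s * Complex.I) + α)) / (Dr : ℂ) := by
    rw [← hWWb]
    rw [mul_div_mul_right _ _ hWb0]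
  rw [hdiv, L2 α β c s hcsC]
  have hIm : (((((-1 : ℝ) * s^2 + c^2 + β*c + β*c*s^2 + β*c^3 + β^2*s^2 + β^2*c^2 + α + α*s^4
        + 2*α*c^2*s^2 + α*c^4 + α*β*c + α*β*c*s^2 + α*β*c^3 + (-1)*α^2*s^2 + α^2*c^2 : ℝ) : ℂ)
          + ((2 * s * ((α - 1) * β + (α ^ 2 - 1) * c) : ℝ) : ℂ) * Complex.I) / ((Dr : ℝ) : ℂ)).im
      = 2 * s * ((α - 1) * β + (α ^ 2 - 1) * c) / Dr := by
    simp only [Complex.div_im, Complex.add_re, Complex.add_im, Complex.mul_re, Complex.mul_im,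
      Complex.I_re, Complex.I_im, Complex.ofReal_re, Complex.ofReal_im, Complex.normSq_ofReal]
    field_simp
    ring
  rw [hIm]
  -- also rewrite abs^2 = normSq for D
  rw [Complex.sq_norm, ← hDrdef]
  field_simp
  ring_nf
  linear_combination (1 - α ^ 2) * hcs
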